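/- Let (α_t, σ_t) and (ᾱ_r, σ̄_r) be two schedulers, i.e., continuous functions [0,1] → [0,1] with α_0 = 0 = σ_1, α_1 = 1 = σ_0, and snr(t) = α_t/σ_t strictly monotone increasing (with snr(0)=0, snr(1)=∞). Define t_r = snr^{-1}(s̄nr(r)) where s̄nr(r) = ᾱ_r/σ̄_r, and s_r = σ̄_r/σ_{t_r}. Then ᾱ_r = s_r·α_{t_r} and σ̄_r = s_r·σ_{t_r} for all r ∈ (0,1), t_r is strictly increasing with t_0 = 0, t_1 = 1, and s_1 = 1. -/

import Mathlib

open Set Filter Topology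

/-- Matching two schedulers `(α, σ)` and `(ᾱ, σ̄)` via signal-to-noise ratios:
with `t_r = snr⁻¹(s̄nr(r))` (characterized by `snr(t_r) = s̄nr(r)` on `(0,1)`,
`t` continuous with values in `[0,1]`) and `s_r = σ̄_r/σ_{t_r}` on `[0,1)` (extended
continuously to `r = 1`), one has `ᾱ_r = s_r α_{t_r}` and `σ̄_r = s_r σ_{t_r}` on `(0,1)`,
`t` is strictly increasing with `t_0 = 0`, `t_1 = 1`, and `s_1 = 1`. -/
theorem scheduler_scale_time_match (α σ αb σb t s : ℝ → ℝ)
    (hαc : ContinuousOn α (Icc 0 1)) (hσc : ContinuousOn σ (Icc 0 1))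
    (hαbc : ContinuousOn αb (Icc 0 1)) (hσbc : ContinuousOn σb (Icc 0 1))
    (hα0 : α 0 = 0) (hσ1 : σ 1 = 0) (hα1 : α 1 = 1) (hσ0 : σ 0 = 1)
    (hαb0 : αb 0 = 0) (hσb1 : σb 1 = 0) (hαb1 : αb 1 = 1) (hσb0 : σb 0 = 1)
    (hσpos : ∀ τ ∈ Ico (0:ℝ) 1, 0 < σ τ)
    (hσbpos : ∀ r ∈ Ico (0:ℝ) 1, 0 < σb r)
    (hsnr : StrictMonoOn (fun τ => α τ / σ τ) (Ico (0:ℝ) 1))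
    (hsnrb : StrictMonoOn (fun r => αb r / σb r) (Ico (0:ℝ) 1))
    (ht_cont : ContinuousOn t (Icc 0 1))
    (ht_mem : MapsTo t (Icc (0:ℝ) 1) (Icc (0:ℝ) 1))
    (ht_def : ∀ r ∈ Ioo (0:ℝ) 1, α (t r) / σ (t r) = αb r / σb r)
    (hs_cont : ContinuousOn s (Icc 0 1))
    (hs_def : ∀ r ∈ Ico (0:ℝ) 1, s r = σb r / σ (t r)) :
    (∀ r ∈ Ioo (0:ℝ) 1, αb r = s r * α (t r) ∧ σb r = s r * σ (t r)) ∧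
      StrictMonoOn t (Icc (0:ℝ) 1) ∧ t 0 = 0 ∧ t 1 = 1 ∧ s 1 = 1 := by
  have hIoo : (Ioo (0:ℝ) 1) ⊆ Icc 0 1 := Ioo_subset_Icc_self
  have h01 : (0:ℝ) ∈ Icc (0:ℝ) 1 := by norm_num
  have h11 : (1:ℝ) ∈ Icc (0:ℝ) 1 := by norm_num
  have h0Ico : (0:ℝ) ∈ Ico (0:ℝ) 1 := by norm_num
  have hsnr0 : α 0 / σ 0 = 0 := by rw [hα0]; simp
  have hsnrb_pos : ∀ r ∈ Ioo (0:ℝ) 1, 0 < αb r / σb r := by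
    intro r hr
    have h0 : αb 0 / σb 0 = 0 := by rw [hαb0]; simp
    have := hsnrb h0Ico ⟨hr.1.le, hr.2⟩ hr.1
    simpa [h0] using this
  have key : ∀ r ∈ Ioo (0:ℝ) 1, t r ∈ Ioo (0:ℝ) 1 := by
    intro r hr
    have hm := ht_mem (hIoo hr)
    have hpos := hsnrb_pos r hr
    have heq := ht_def r hr
    refine ⟨hm.1.lt_of_ne fun h => ?_, hm.2.lt_of_ne fun h => ?_⟩
    · rw [← h, hα0, zero_div] at heq
      exact absurd heq.symm hpos.ne'
    · rw [h, hσ1, div_zero] at heq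
      exact absurd heq.symm hpos.ne'
  have part1 : ∀ r ∈ Ioo (0:ℝ) 1, αb r = s r * α (t r) ∧ σb r = s r * σ (t r) := by
    intro r hr
    have htr := key r hr
    have hσt : (0:ℝ) < σ (t r) := hσpos _ ⟨htr.1.le, htr.2⟩
    have hσb : (0:ℝ) < σb r := hσbpos r ⟨hr.1.le, hr.2⟩
    have hs := hs_def r ⟨hr.1.le, hr.2⟩
    have heq := ht_def r hr
    have hσt' := hσt.ne'
    have hσb' := hσb.ne'
    constructor
    · rw [hs]
      field_simp at heq ⊢
      linarith [heq]
    · rw [hs]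
      field_simp
  -- neBot instances
  have hne0 : (𝓝[Ioo (0:ℝ) 1] (0:ℝ)).NeBot := by
    apply mem_closure_iff_nhdsWithin_neBot.mp
    rw [closure_Ioo (by norm_num : (0:ℝ) ≠ 1)]
    exact h01
  have hne1 : (𝓝[Ioo (0:ℝ) 1] (1:ℝ)).NeBot := by
    apply mem_closure_iff_nhdsWithin_neBot.mp
    rw [closure_Ioo (by norm_num : (0:ℝ) ≠ 1)]
    exact h11
  have ht0 : t 0 = 0 := by
    by_contra h
    have h0m := ht_mem h01
    have ht0pos : 0 < t 0 := h0m.1.lt_of_ne (Ne.symm h)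
    haveI := hne0
    have hmem : ∀ᶠ r in 𝓝[Ioo (0:ℝ) 1] (0:ℝ), r ∈ Ioo (0:ℝ) 1 := eventually_mem_nhdsWithin
    have htt : Tendsto t (𝓝[Ioo (0:ℝ) 1] (0:ℝ)) (𝓝 (t 0)) :=
      (ht_cont 0 h01).tendsto.mono_left (nhdsWithin_mono _ hIoo)
    have hsb : Tendsto (fun r => αb r / σb r) (𝓝[Ioo (0:ℝ) 1] (0:ℝ)) (𝓝 0) := by
      have hcw := ((hαbc 0 h01).div (hσbc 0 h01) (by rw [hσb0]; norm_num))
      have h' : Tendsto (fun r => αb r / σb r) (𝓝[Ioo (0:ℝ) 1] (0:ℝ)) (𝓝 (αb 0 / σb 0)) :=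
        hcw.tendsto.mono_left (nhdsWithin_mono _ hIoo)
      rw [hαb0, hσb0, zero_div] at h'
      exact h'
    have hsnrt : Tendsto (fun r => α (t r) / σ (t r)) (𝓝[Ioo (0:ℝ) 1] (0:ℝ)) (𝓝 0) :=
      Tendsto.congr' (hmem.mono fun r hr => (ht_def r hr).symm) hsb
    have hc : t 0 / 2 ∈ Ico (0:ℝ) 1 := ⟨by positivity, by nlinarith [h0m.2]⟩
    have hsnrc : 0 < α (t 0 / 2) / σ (t 0 / 2) := by
      have := hsnr h0Ico hc (by positivity)
      simpa [hsnr0] using this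
    have hev1 : ∀ᶠ r in 𝓝[Ioo (0:ℝ) 1] (0:ℝ), t 0 / 2 < t r :=
      htt.eventually (eventually_gt_nhds (by linarith))
    have hev2 : ∀ᶠ r in 𝓝[Ioo (0:ℝ) 1] (0:ℝ),
        α (t r) / σ (t r) < α (t 0 / 2) / σ (t 0 / 2) :=
      hsnrt.eventually (eventually_lt_nhds hsnrc)
    obtain ⟨r, hr, h1, h2⟩ := (hmem.and (hev1.and hev2)).exists
    have htr := key r hr
    have := hsnr hc ⟨htr.1.le, htr.2⟩ h1
    simp only at this
    linarith
  have ht1 : t 1 = 1 := by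
    by_contra h
    have h1m := ht_mem h11
    have ht1lt : t 1 < 1 := h1m.2.lt_of_ne h
    haveI := hne1
    have hmem : ∀ᶠ r in 𝓝[Ioo (0:ℝ) 1] (1:ℝ), r ∈ Ioo (0:ℝ) 1 := eventually_mem_nhdsWithin
    have htt : Tendsto t (𝓝[Ioo (0:ℝ) 1] (1:ℝ)) (𝓝 (t 1)) :=
      (ht_cont 1 h11).tendsto.mono_left (nhdsWithin_mono _ hIoo)
    set c := (t 1 + 1) / 2 with hcdef
    have hc : c ∈ Ico (0:ℝ) 1 := ⟨by linarith [h1m.1], by linarith⟩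
    have hev1 : ∀ᶠ r in 𝓝[Ioo (0:ℝ) 1] (1:ℝ), t r < c :=
      htt.eventually (eventually_lt_nhds (by rw [hcdef]; linarith))
    set K := α c / σ c with hKdef
    have htend : Tendsto (fun r => αb r - K * σb r) (𝓝[Ioo (0:ℝ) 1] (1:ℝ)) (𝓝 1) := by
      have hcw := (hαbc 1 h11).sub ((continuousWithinAt_const (b := K)).mul (hσbc 1 h11))
      have h' : Tendsto (fun r => αb r - K * σb r) (𝓝[Ioo (0:ℝ) 1] (1:ℝ))
          (𝓝 (αb 1 - K * σb 1)) :=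
        hcw.tendsto.mono_left (nhdsWithin_mono _ hIoo)
      rw [hαb1, hσb1, mul_zero, sub_zero] at h'
      exact h'
    have hev2 : ∀ᶠ r in 𝓝[Ioo (0:ℝ) 1] (1:ℝ), 0 < αb r - K * σb r :=
      htend.eventually (eventually_gt_nhds one_pos)
    obtain ⟨r, hr, h1', h2'⟩ := (hmem.and (hev1.and hev2)).exists
    have htr := key r hr
    have hσb : (0:ℝ) < σb r := hσbpos r ⟨hr.1.le, hr.2⟩
    have hlt : K < αb r / σb r := (lt_div_iff₀ hσb).mpr (by linarith)
    have hmono := hsnr ⟨htr.1.le, htr.2⟩ hc h1'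
    simp only at hmono
    rw [ht_def r hr] at hmono
    linarith
  have hmono : StrictMonoOn t (Icc (0:ℝ) 1) := by
    intro r1 hr1 r2 hr2 hlt
    rcases eq_or_lt_of_le hr1.1 with h1 | h1
    · rw [← h1, ht0]
      rcases eq_or_lt_of_le hr2.2 with h2 | h2
      · rw [h2, ht1]; norm_num
      · exact (key r2 ⟨h1 ▸ hlt, h2⟩).1
    · rcases eq_or_lt_of_le hr2.2 with h2 | h2
      · rw [h2, ht1]
        exact (key r1 ⟨h1, lt_of_lt_of_le hlt hr2.2⟩).2
      · have hm1 : r1 ∈ Ioo (0:ℝ) 1 := ⟨h1, lt_trans hlt h2⟩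
        have hm2 : r2 ∈ Ioo (0:ℝ) 1 := ⟨lt_trans h1 hlt, h2⟩
        have hb := hsnrb ⟨hm1.1.le, hm1.2⟩ ⟨hm2.1.le, hm2.2⟩ hlt
        simp only at hb
        rw [← ht_def r1 hm1, ← ht_def r2 hm2] at hb
        have k1 := key r1 hm1
        have k2 := key r2 hm2
        exact (hsnr.lt_iff_lt ⟨k1.1.le, k1.2⟩ ⟨k2.1.le, k2.2⟩).mp hb
  have hs1 : s 1 = 1 := by
    haveI := hne1
    have hmem : ∀ᶠ r in 𝓝[Ioo (0:ℝ) 1] (1:ℝ), r ∈ Ioo (0:ℝ) 1 := eventually_mem_nhdsWithin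
    have hst : Tendsto s (𝓝[Ioo (0:ℝ) 1] (1:ℝ)) (𝓝 (s 1)) :=
      (hs_cont 1 h11).tendsto.mono_left (nhdsWithin_mono _ hIoo)
    have httw : Tendsto t (𝓝[Ioo (0:ℝ) 1] (1:ℝ)) (𝓝[Icc (0:ℝ) 1] 1) := by
      rw [tendsto_nhdsWithin_iff]
      refine ⟨?_, hmem.mono fun r hr => hIoo (key r hr)⟩
      have := (ht_cont 1 h11).tendsto.mono_left (nhdsWithin_mono _ hIoo)
      rwa [ht1] at this
    have hαt : Tendsto (fun r => α (t r)) (𝓝[Ioo (0:ℝ) 1] (1:ℝ)) (𝓝 1) := by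
      have := (hαc 1 h11).tendsto.comp httw
      rw [hα1] at this
      exact this
    have h1t : Tendsto (fun r => s r * α (t r)) (𝓝[Ioo (0:ℝ) 1] (1:ℝ)) (𝓝 (s 1 * 1)) :=
      hst.mul hαt
    have h2t : Tendsto αb (𝓝[Ioo (0:ℝ) 1] (1:ℝ)) (𝓝 1) := by
      have := (hαbc 1 h11).tendsto.mono_left (nhdsWithin_mono _ hIoo)
      rwa [hαb1] at this
    have heq : (fun r => s r * α (t r)) =ᶠ[𝓝[Ioo (0:ℝ) 1] (1:ℝ)] αb :=
      hmem.mono fun r hr => ((part1 r hr).1).symm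
    have := tendsto_nhds_unique (h1t.congr' heq) h2t
    linarith
  exact ⟨part1, hmono, ht0, ht1, hs1⟩
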